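/- Let α ∈ [0,1], β = √(1−α²), and consider the two-qubit matrix ρ̃ = (1/4)·(I₄ + (3/5)(2α²−1)(σ₃⊗I₂ + I₂⊗σ₃) + (3/5)·(2αβ·σ₁⊗σ₁ − 2αβ·σ₂⊗σ₂ + σ₃⊗σ₃)). Then ρ̃^{T₂} fails to be positive semidefinite (equivalently, ρ̃ is entangled) if and only if (3−2√2)/6 < α² < (3+2√2)/6. This is the range for broadcasting of entanglement of the pure state α|00⟩+β|11⟩ via nonlocal optimal cloning. -/

import Mathlib

open Matrix Kronecker
open scoped ComplexOrder

/-- The three Pauli matrices. -/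
noncomputable def pauli : Fin 3 → Matrix (Fin 2) (Fin 2) ℂ :=
  ![!![0, 1; 1, 0], !![0, -Complex.I; Complex.I, 0], !![1, 0; 0, -1]]

/-- Partial transpose on the second qubit:
`(ρ^{T₂})_{(i,μ),(j,ν)} = ρ_{(i,ν),(j,μ)}`. -/
noncomputable def ptranspose (ρ : Matrix (Fin 2 × Fin 2) (Fin 2 × Fin 2) ℂ) :
    Matrix (Fin 2 × Fin 2) (Fin 2 × Fin 2) ℂ :=
  Matrix.of fun p q => ρ (p.1, q.2) (q.1, p.2)

section Aux

/-- The partially transposed clone output, parametrized by its three distinct entries. -/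
noncomputable def mat (d0 d3 e : ℝ) : Matrix (Fin 2 × Fin 2) (Fin 2 × Fin 2) ℂ :=
  Matrix.of fun p q =>
    if p = ((0 : Fin 2), (0 : Fin 2)) ∧ q = (0, 0) then (d0 : ℂ)
    else if (p = (0, 1) ∧ q = (0, 1)) ∨ (p = (1, 0) ∧ q = (1, 0)) then (1/10 : ℂ)
    else if (p = (0, 1) ∧ q = (1, 0)) ∨ (p = (1, 0) ∧ q = (0, 1)) then (e : ℂ)
    else if p = (1, 1) ∧ q = (1, 1) then (d3 : ℂ) else 0

/-- A Cholesky-like factor for `mat`. -/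
noncomputable def fac (d0 d3 e : ℝ) : Matrix (Fin 2 × Fin 2) (Fin 2 × Fin 2) ℂ :=
  Matrix.of fun p q =>
    if p = ((0 : Fin 2), (0 : Fin 2)) ∧ q = (0, 0) then (Real.sqrt d0 : ℂ)
    else if p = (0, 1) ∧ (q = (0, 1) ∨ q = (1, 0)) then (Real.sqrt ((1/10 + e)/2) : ℂ)
    else if p = (1, 0) ∧ q = (0, 1) then (Real.sqrt ((1/10 - e)/2) : ℂ)
    else if p = (1, 0) ∧ q = (1, 0) then -(Real.sqrt ((1/10 - e)/2) : ℂ)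
    else if p = (1, 1) ∧ q = (1, 1) then (Real.sqrt d3 : ℂ) else 0

set_option maxHeartbeats 1600000 in
lemma matB (α : ℝ) :
    ptranspose ((1/4 : ℂ) • ((1 : Matrix (Fin 2 × Fin 2) (Fin 2 × Fin 2) ℂ)
        + ((3/5 * (2*α^2 - 1) : ℝ) : ℂ) • (pauli 2 ⊗ₖ 1 + 1 ⊗ₖ pauli 2)
        + (3/5 : ℂ) • (((2 * α * Real.sqrt (1 - α^2) : ℝ) : ℂ) • (pauli 0 ⊗ₖ pauli 0)
            - ((2 * α * Real.sqrt (1 - α^2) : ℝ) : ℂ) • (pauli 1 ⊗ₖ pauli 1)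
            + pauli 2 ⊗ₖ pauli 2)))
      = mat ((1 + 6*α^2)/10) ((7 - 6*α^2)/10) (3*α*Real.sqrt (1 - α^2)/5) := by
  ext ⟨i, μ⟩ ⟨j, ν⟩
  fin_cases i <;> fin_cases μ <;> fin_cases j <;> fin_cases ν <;>
  · simp only [ptranspose, mat, pauli, Matrix.of_apply, Matrix.smul_apply, Matrix.add_apply,
      Matrix.sub_apply, Matrix.kroneckerMap_apply, Matrix.one_apply, Matrix.cons_val',
      Matrix.cons_val_zero, Matrix.cons_val_one, Matrix.head_cons, Matrix.cons_val_fin_one,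
      Matrix.empty_val', Matrix.head_fin_const, Matrix.cons_val, smul_eq_mul, Prod.mk.injEq, Fin.isValue]
    norm_num
    try ring

set_option maxHeartbeats 1600000 in
lemma mat_psd (d0 d3 e : ℝ) (h0 : 0 ≤ d0) (h3 : 0 ≤ d3) (he0 : 0 ≤ e) (he : e ≤ 1/10) :
    (mat d0 d3 e).PosSemidef := by
  have key : mat d0 d3 e = (fac d0 d3 e)ᴴ * fac d0 d3 e := by
    have h1 : (0:ℝ) ≤ (1/10 + e)/2 := by linarith
    have h2 : (0:ℝ) ≤ (1/10 - e)/2 := by linarith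
    have hx : ((Real.sqrt ((1/10 + e)/2) : ℝ) : ℂ) * ((Real.sqrt ((1/10 + e)/2) : ℝ) : ℂ)
        = (((1/10 + e)/2 : ℝ) : ℂ) := by
      rw [← Complex.ofReal_mul, Real.mul_self_sqrt h1]
    have hy : ((Real.sqrt ((1/10 - e)/2) : ℝ) : ℂ) * ((Real.sqrt ((1/10 - e)/2) : ℝ) : ℂ)
        = (((1/10 - e)/2 : ℝ) : ℂ) := by
      rw [← Complex.ofReal_mul, Real.mul_self_sqrt h2]
    have hx0 : ((Real.sqrt d0 : ℝ) : ℂ) * ((Real.sqrt d0 : ℝ) : ℂ) = ((d0 : ℝ) : ℂ) := by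
      rw [← Complex.ofReal_mul, Real.mul_self_sqrt h0]
    have hx3 : ((Real.sqrt d3 : ℝ) : ℂ) * ((Real.sqrt d3 : ℝ) : ℂ) = ((d3 : ℝ) : ℂ) := by
      rw [← Complex.ofReal_mul, Real.mul_self_sqrt h3]
    ext ⟨i, μ⟩ ⟨j, ν⟩
    fin_cases i <;> fin_cases μ <;> fin_cases j <;> fin_cases ν <;>
    · simp only [mat, fac, Matrix.mul_apply, Matrix.conjTranspose_apply, Matrix.of_apply,
        Fintype.sum_prod_type, Fin.sum_univ_two, Prod.mk.injEq, Fin.isValue, Fin.mk_zero,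
        Fin.mk_one, Fin.zero_eta, Fin.mk_one]
      simp only [Complex.star_def, Complex.conj_ofReal, map_neg, mul_zero, zero_mul, add_zero,
        zero_add, mul_neg, neg_mul, neg_neg, map_zero, neg_zero, ite_true, ite_false, and_self,
        Prod.mk.injEq, Fin.isValue, one_ne_zero, zero_ne_one, and_false, false_and,
        and_true, true_and, or_self, if_true, if_false, or_false, false_or,
        reduceCtorEq, Fin.reduceEq]
      try rw [hx0]
      try rw [hx3]
      try rw [hx]
      try rw [hy]
      try push_cast
      try ring
      try norm_num
  rw [key]
  exact Matrix.posSemidef_conjTranspose_mul_self _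

set_option maxHeartbeats 1600000 in
lemma mat_not_psd (d0 d3 e : ℝ) (he : 1/10 < e) : ¬ (mat d0 d3 e).PosSemidef := by
  intro h
  have h2 := h.dotProduct_mulVec_nonneg (fun p => if p = ((0 : Fin 2), (1 : Fin 2)) then 1
    else if p = (1, 0) then -1 else 0)
  simp only [mat, dotProduct, Matrix.mulVec, Matrix.of_apply,
    Fintype.sum_prod_type, Fin.sum_univ_two, Prod.mk.injEq, Fin.isValue,
    one_ne_zero, zero_ne_one, and_false, false_and, and_true, true_and, and_self,
    or_self, if_true, if_false, or_false, false_or, ite_true, ite_false,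
    mul_zero, zero_mul, add_zero, zero_add, mul_one, mul_neg, neg_mul, neg_neg,
    star_one, star_neg, star_zero, Pi.star_apply, reduceCtorEq, Fin.reduceEq] at h2
  have : (0:ℝ) ≤ 1/10 - e + (1/10 - e) := by
    have := h2
    rw [show (-0 + 1 * (1 / 10 + -(e:ℂ)) + (-(1 * ((e:ℂ) + -(1 / 10))) + -0))
        = ((1/10 - e + (1/10 - e) : ℝ) : ℂ) by push_cast; ring] at this
    exact_mod_cast this
  linarith

end Aux

/-- Broadcasting range of the pure state `α|00⟩ + β|11⟩` via nonlocal optimal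
cloning.  The clone output `ρ̃₁₂ = {(3/5)x, (3/5)x, (3/5)T}` of the Buzek–Hillery nonlocal
optimal cloner has non-positive-semidefinite partial transpose (i.e. is entangled) iff
`(3−2√2)/6 < α² < (3+2√2)/6`. -/
theorem pure_state_broadcasting_range_nonlocal (α : ℝ) (hα0 : 0 ≤ α) (hα1 : α ≤ 1) :
    ¬ (ptranspose ((1/4 : ℂ) • ((1 : Matrix (Fin 2 × Fin 2) (Fin 2 × Fin 2) ℂ)
        + ((3/5 * (2*α^2 - 1) : ℝ) : ℂ) • (pauli 2 ⊗ₖ 1 + 1 ⊗ₖ pauli 2)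
        + (3/5 : ℂ) • (((2 * α * Real.sqrt (1 - α^2) : ℝ) : ℂ) • (pauli 0 ⊗ₖ pauli 0)
            - ((2 * α * Real.sqrt (1 - α^2) : ℝ) : ℂ) • (pauli 1 ⊗ₖ pauli 1)
            + pauli 2 ⊗ₖ pauli 2)))).PosSemidef
    ↔ ((3 - 2*Real.sqrt 2) / 6 < α^2 ∧ α^2 < (3 + 2*Real.sqrt 2) / 6) := by
  rw [matB α]
  have ht1 : α^2 ≤ 1 := by nlinarith
  have hs0 : 0 ≤ Real.sqrt (1 - α^2) := Real.sqrt_nonneg _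
  have hs2 : Real.sqrt (1 - α^2) ^ 2 = 1 - α^2 := Real.sq_sqrt (by nlinarith)
  have hr0 : 0 ≤ Real.sqrt 2 := Real.sqrt_nonneg 2
  have hr2 : Real.sqrt 2 ^ 2 = 2 := Real.sq_sqrt (by norm_num)
  set s := Real.sqrt (1 - α^2) with hs
  set r := Real.sqrt 2 with hrr
  have he0 : 0 ≤ 3*α*s/5 := by positivity
  constructor
  · intro hnot
    by_contra hc
    have hcase : α^2 ≤ (3 - 2*r)/6 ∨ (3 + 2*r)/6 ≤ α^2 := by
      rcases not_and_or.mp hc with h | h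
      · exact Or.inl (not_lt.mp h)
      · exact Or.inr (not_lt.mp h)
    have hesq : (3*α*s/5)^2 ≤ 1/100 := by
      have h36 : 0 ≤ 36*(α^2)^2 - 36*α^2 + 1 := by
        rcases hcase with h | h
        · nlinarith [sq_nonneg (3 - 2*r - 6*α^2)]
        · nlinarith [sq_nonneg (6*α^2 - 3 - 2*r)]
      nlinarith [sq_nonneg (α*s)]
    have he : 3*α*s/5 ≤ 1/10 := by nlinarith
    exact hnot (mat_psd _ _ _ (by positivity) (by nlinarith) he0 he)
  · rintro ⟨hl, hr⟩
    apply mat_not_psd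
    have h36 : 36*(α^2)^2 - 36*α^2 + 1 < 0 := by nlinarith
    have hesq : 1/100 < (3*α*s/5)^2 := by nlinarith
    nlinarith
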